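/- Let t be a tame SL_2-tiling of the plane over a field (an infinite matrix of rank 2 with every adjacent 2×2 minor equal to 1). Then for any three consecutive columns C_0, C_1, C_2 of t, there exists a unique scalar α such that C_0 + C_2 = α·C_1; moreover α equals the determinant of the 2×2 matrix formed by the entries of C_0 and C_2 in any two adjacent rows. -/

import Mathlib

/-- A function `t : ℤ² → K` is an SL₂-tiling if every adjacent 2×2 minor
equals 1 (coordinates: the second axis indexes rows). -/
def IsSL2Tiling {K : Type*} [Field K] (t : ℤ × ℤ → K) : Prop :=
  ∀ x y : ℤ, t (x, y) * t (x + 1, y + 1) - t (x + 1, y) * t (x, y + 1) = 1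

/-- An SL₂-tiling is tame if every contiguous 3×3 minor vanishes (the tiling,
viewed as an infinite matrix, has rank 2). -/
def IsTame {K : Type*} [Field K] (t : ℤ × ℤ → K) : Prop :=
  ∀ x y : ℤ,
    (Matrix.of fun i j : Fin 3 => t (x + (j : ℤ), y + (i : ℤ))).det = 0

/-- Linearization of columns in a tame SL₂-tiling: for any three consecutive
columns `C₀, C₁, C₂` there is a unique scalar `α` with `C₀ + C₂ = α·C₁`, and
`α` equals the 2×2 determinant formed by the entries of `C₀` and `C₂` in any
two adjacent rows. -/
theorem tame_tiling_column_linearization {K : Type*} [Field K]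
    (t : ℤ × ℤ → K) (ht : IsSL2Tiling t) (htame : IsTame t) (x : ℤ) :
    (∃! α : K, ∀ y : ℤ, t (x, y) + t (x + 2, y) = α * t (x + 1, y)) ∧
      ∀ y₀ y : ℤ,
        t (x, y) + t (x + 2, y) =
          (t (x, y₀) * t (x + 2, y₀ + 1) - t (x + 2, y₀) * t (x, y₀ + 1)) *
            t (x + 1, y) := by
  -- an opaque name for the candidate scalar read off at row y
  obtain ⟨α, hαdef⟩ : ∃ f : ℤ → K, ∀ y : ℤ,
      f y = t (x, y) * t (x + 2, y + 1) - t (x + 2, y) * t (x, y + 1) :=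
    ⟨_, fun _ => rfl⟩
  -- local relation at row y, expanded form
  have L1e : ∀ y : ℤ, t (x, y) + t (x + 2, y) =
      (t (x, y) * t (x + 2, y + 1) - t (x + 2, y) * t (x, y + 1)) * t (x + 1, y) := by
    intro y
    have A := ht x y
    have B := ht (x + 1) y
    rw [show x + 1 + 1 = x + 2 from by ring] at B
    linear_combination (-t (x, y)) * B - t (x + 2, y) * A
  -- local relation at row y+1 with the scalar from row y, expanded form
  have L1e' : ∀ y : ℤ, t (x, y + 1) + t (x + 2, y + 1) =
      (t (x, y) * t (x + 2, y + 1) - t (x + 2, y) * t (x, y + 1)) * t (x + 1, y + 1) := by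
    intro y
    have A := ht x y
    have B := ht (x + 1) y
    rw [show x + 1 + 1 = x + 2 from by ring] at B
    linear_combination (-t (x, y + 1)) * B - t (x + 2, y + 1) * A
  -- tameness: consecutive scalars agree up to a factor t(x+1, y+2)
  have L2e : ∀ y : ℤ,
      ((t (x, y + 1) * t (x + 2, y + 2) - t (x + 2, y + 1) * t (x, y + 2)) -
        (t (x, y) * t (x + 2, y + 1) - t (x + 2, y) * t (x, y + 1))) * t (x + 1, y + 2) = 0 := by
    intro y
    have T := htame x y
    rw [Matrix.det_fin_three] at T
    simp only [Matrix.of_apply] at T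
    norm_num at T
    have E0 := L1e y
    have E1 := L1e' y
    have E2 := L1e' (y + 1)
    rw [show (y : ℤ) + 1 + 1 = y + 2 from by ring] at E2
    have A := ht x y
    linear_combination T
      - (t (x, y + 1) * t (x + 1, y + 2) - t (x + 1, y + 1) * t (x, y + 2)) * E0
      + (t (x, y) * t (x + 1, y + 2) - t (x + 1, y) * t (x, y + 2)) * E1
      - (t (x, y) * t (x + 1, y + 1) - t (x + 1, y) * t (x, y + 1)) * E2
      - (((t (x, y + 1) * t (x + 2, y + 2) - t (x + 2, y + 1) * t (x, y + 2)) -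
          (t (x, y) * t (x + 2, y + 1) - t (x + 2, y) * t (x, y + 1))) * t (x + 1, y + 2)) * A
  -- consecutive scalars agree
  have hstep : ∀ y : ℤ, α (y + 1) = α y := by
    intro y
    rw [hαdef, hαdef, show (y : ℤ) + 1 + 1 = y + 2 from by ring]
    by_cases hp : t (x + 1, y + 1) = 0
    · -- then t (x+1, y+2) ≠ 0, use L2e
      have B := ht (x + 1) (y + 1)
      rw [show (y : ℤ) + 1 + 1 = y + 2 from by ring, hp] at B
      have hp2 : t (x + 1, y + 2) ≠ 0 := by
        intro h0
        rw [h0] at B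
        simp at B
      rcases mul_eq_zero.mp (L2e y) with h | h
      · exact sub_eq_zero.mp h
      · exact absurd h hp2
    · -- compare the two expressions for row y+1
      have E1 := L1e' y
      have E2 := L1e (y + 1)
      rw [show (y : ℤ) + 1 + 1 = y + 2 from by ring] at E2
      have h0 : ((t (x, y + 1) * t (x + 2, y + 2) - t (x + 2, y + 1) * t (x, y + 2)) -
          (t (x, y) * t (x + 2, y + 1) - t (x + 2, y) * t (x, y + 1))) * t (x + 1, y + 1) = 0 := by
        linear_combination E1 - E2
      rcases mul_eq_zero.mp h0 with h | h
      · exact sub_eq_zero.mp h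
      · exact absurd h hp
  -- all scalars agree with α 0
  have hconst : ∀ y : ℤ, α y = α 0 := by
    intro y
    induction y using Int.induction_on with
    | zero => rfl
    | succ n ih => rw [hstep n, ih]
    | pred n ih =>
      have h := hstep (-(n : ℤ) - 1)
      rw [show (-(n : ℤ) - 1 + 1) = -n from by ring] at h
      rw [← h]
      exact ih
  have key : ∀ y₀ y : ℤ, t (x, y) + t (x + 2, y) = α y₀ * t (x + 1, y) := by
    intro y₀ y
    rw [show α y₀ = α y from by rw [hconst y₀, hconst y], hαdef]
    exact L1e y
  constructor
  · refine ⟨α 0, key 0, ?_⟩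
    intro β hβ
    have B := ht (x + 1) 0
    rw [show x + 1 + 1 = x + 2 from by ring] at B
    by_cases hp : t (x + 1, 0) = 0
    · have hp1 : t (x + 1, (0 : ℤ) + 1) ≠ 0 := by
        intro h0
        rw [hp, h0] at B
        simp at B
      have hp1' : t (x + 1, (1 : ℤ)) ≠ 0 := by
        rw [show ((0 : ℤ) + 1) = 1 from by ring] at hp1
        exact hp1
      have h1 := hβ 1
      have h2 := key 0 1
      have h0 : (β - α 0) * t (x + 1, (1 : ℤ)) = 0 := by
        linear_combination h2 - h1
      rcases mul_eq_zero.mp h0 with h | h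
      · exact sub_eq_zero.mp h
      · exact absurd h hp1'
    · have h1 := hβ 0
      have h2 := key 0 0
      have h0 : (β - α 0) * t (x + 1, (0 : ℤ)) = 0 := by
        linear_combination h2 - h1
      rcases mul_eq_zero.mp h0 with h | h
      · exact sub_eq_zero.mp h
      · exact absurd h hp
  · intro y₀ y
    rw [← hαdef y₀]
    exact key y₀ y
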